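/- Borel–Carathéodory estimate: let f be an entire function, and for r > 0 set A(r) = max_{|z|=r} Re f(z) and M(r) = max_{|z|=r} |f(z)|. Then for all 0 < r < R, M(r) ≤ (2r/(R−r))·A(R) + ((R+r)/(R−r))·|f(0)|. -/

import Mathlib

open Metric Set

/-- Maximum modulus of `f` on the circle `|z| = r`. -/
noncomputable def maxMod (f : ℂ → ℂ) (r : ℝ) : ℝ :=
  sSup ((fun z => ‖f z‖) '' Metric.sphere (0 : ℂ) r)

/-- Maximum of `Re f` on the circle `|z| = r`. -/
noncomputable def maxRe (f : ℂ → ℂ) (r : ℝ) : ℝ :=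
  sSup ((fun z => (f z).re) '' Metric.sphere (0 : ℂ) r)

lemma re_le_maxRe_closedBall (f : ℂ → ℂ) (hf : Differentiable ℂ f) {R : ℝ} (hR : 0 < R)
    {z : ℂ} (hz : z ∈ closedBall (0 : ℂ) R) : (f z).re ≤ maxRe f R := by
  have hb : BddAbove ((fun z => (f z).re) '' sphere (0 : ℂ) R) :=
    (isCompact_sphere 0 R).bddAbove_image
      (Complex.continuous_re.comp hf.continuous).continuousOn
  have key : ∀ w ∈ sphere (0 : ℂ) R, (f w).re ≤ maxRe f R := fun w hw =>
    le_csSup hb (mem_image_of_mem _ hw)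
  have hexp : Differentiable ℂ (fun w => Complex.exp (f w)) := hf.cexp
  have h1 : ‖Complex.exp (f z)‖ ≤ Real.exp (maxRe f R) := by
    refine Complex.norm_le_of_forall_mem_frontier_norm_le isBounded_ball hexp.diffContOnCl
      (fun w hw => ?_) (by rwa [closure_ball (0 : ℂ) hR.ne'])
    rw [frontier_ball (0 : ℂ) hR.ne'] at hw
    rw [Complex.norm_exp]
    exact Real.exp_le_exp.2 (key w hw)
  rw [Complex.norm_exp] at h1
  exact Real.exp_le_exp.1 h1

lemma abs_lt_abs_sub_of_re_lt {C : ℝ} (hC : 0 < C) {w : ℂ} (hw : w.re < C) :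
    ‖w‖ < ‖2 * C - w‖ := by
  have h1 : ‖w‖ ^ 2 < ‖2 * (C : ℂ) - w‖ ^ 2 := by
    rw [Complex.sq_norm, Complex.sq_norm, Complex.normSq_apply, Complex.normSq_apply]
    simp only [Complex.sub_re, Complex.sub_im, Complex.mul_re, Complex.mul_im,
      Complex.ofReal_re, Complex.ofReal_im, Complex.re_ofNat, Complex.im_ofNat]
    nlinarith
  exact lt_of_pow_lt_pow_left₀ 2 (norm_nonneg _) h1

/-- Borel–Carathéodory estimate. -/
theorem borel_caratheodory (f : ℂ → ℂ) (hf : Differentiable ℂ f)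
    (r R : ℝ) (hr : 0 < r) (hrR : r < R) :
    maxMod f r ≤ (2 * r / (R - r)) * maxRe f R + ((R + r) / (R - r)) * ‖f 0‖ := by
  have hR : 0 < R := hr.trans hrR
  have hRr : 0 < R - r := by linarith
  set A := maxRe f R with hA
  set B := A - (f 0).re with hB
  have hre0 : (f 0).re ≤ A :=
    re_le_maxRe_closedBall f hf hR (by simp [hR.le])
  have hB0 : 0 ≤ B := by simp [hB]; linarith
  -- key pointwise estimate with ε
  have main : ∀ ε > 0, ∀ z ∈ sphere (0 : ℂ) r,
      ‖f z‖ ≤ 2 * r * (B + ε) / (R - r) + ‖f 0‖ := by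
    intro ε hε z hz
    set C := B + ε with hC
    have hCpos : 0 < C := by positivity
    set g : ℂ → ℂ := fun w => f w - f 0 with hg
    have hgre : ∀ w ∈ closedBall (0 : ℂ) R, (g w).re < C := by
      intro w hw
      have := re_le_maxRe_closedBall f hf hR hw
      simp only [hg, Complex.sub_re]
      simp only [hC, hB]
      linarith
    have hden : ∀ w ∈ closedBall (0 : ℂ) R,
        ‖g w‖ < ‖2 * C - g w‖ :=
      fun w hw => abs_lt_abs_sub_of_re_lt hCpos (hgre w hw)
    have hdenne : ∀ w ∈ closedBall (0 : ℂ) R, (2 * (C : ℂ) - g w) ≠ 0 := by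
      intro w hw h0
      have := hden w hw
      rw [h0, norm_zero] at this
      exact absurd this (norm_nonneg _).not_gt
    set φ : ℂ → ℂ := fun w => g w / (2 * C - g w) with hφ
    have hφ0 : φ 0 = 0 := by simp [hφ, hg]
    have hφd : DifferentiableOn ℂ φ (ball (0 : ℂ) R) := by
      apply DifferentiableOn.div
      · exact (hf.sub_const (f 0)).differentiableOn
      · exact (differentiable_const _|>.sub (hf.sub_const (f 0))).differentiableOn
      · exact fun w hw => hdenne w (ball_subset_closedBall hw)
    have hmaps : MapsTo φ (ball (0 : ℂ) R) (ball (φ 0) 1) := by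
      intro w hw
      rw [hφ0, mem_ball_zero_iff, hφ, norm_div]
      rw [div_lt_one (lt_of_le_of_lt (norm_nonneg _)
        (hden w (ball_subset_closedBall hw)))]
      exact hden w (ball_subset_closedBall hw)
    have hzball : z ∈ ball (0 : ℂ) R := by
      rw [mem_ball_zero_iff]
      rw [mem_sphere_zero_iff_norm] at hz
      rw [hz]; exact hrR
    have schwarz := Complex.dist_le_div_mul_dist_of_mapsTo_ball hφd (hmaps.mono_right ball_subset_closedBall) hzball
    rw [hφ0, dist_zero_right, dist_zero_right] at schwarz
    rw [mem_sphere_zero_iff_norm] at hz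
    rw [show ‖z‖ = r from hz] at schwarz
    -- schwarz : abs (φ z) ≤ 1 / R * r
    have hzcb : z ∈ closedBall (0 : ℂ) R := ball_subset_closedBall hzball
    set a := ‖g z‖ with ha
    set d := ‖2 * (C : ℂ) - g z‖ with hd
    have hdpos : 0 < d := lt_of_le_of_lt (norm_nonneg _) (hden z hzcb)
    have hφz : ‖φ z‖ = a / d := by rw [hφ, norm_div]
    rw [hφz] at schwarz
    have hd2 : d ≤ 2 * C + a := by
      have h := norm_sub_le (2 * (C : ℂ)) (g z)
      calc d ≤ ‖2 * (C : ℂ)‖ + ‖g z‖ := h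
        _ = 2 * C + a := by
              rw [ha]
              congr 1
              rw [norm_mul, Complex.norm_real, Complex.norm_ofNat, Real.norm_eq_abs, abs_of_pos hCpos]
    rw [show (1 : ℝ) / R * r = r / R by ring] at schwarz
    have haR : a * R ≤ r * d := (div_le_div_iff₀ hdpos hR).1 schwarz
    have hale : a ≤ 2 * r * C / (R - r) := by
      rw [le_div_iff₀ hRr]
      nlinarith
    have : ‖f z‖ ≤ a + ‖f 0‖ := by
      calc ‖f z‖ = ‖g z + f 0‖ := by simp [hg]
        _ ≤ a + ‖f 0‖ := norm_add_le _ _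
    linarith [this, hale]
  -- pass from pointwise to sup, then ε → 0
  have hsne : (sphere (0 : ℂ) r).Nonempty := NormedSpace.sphere_nonempty.2 hr.le
  have hM : ∀ ε > 0, maxMod f r ≤ 2 * r * (B + ε) / (R - r) + ‖f 0‖ := by
    intro ε hε
    apply csSup_le (hsne.image _)
    rintro x ⟨z, hz, rfl⟩
    exact main ε hε z hz
  have hlim : maxMod f r ≤ 2 * r * B / (R - r) + ‖f 0‖ := by
    apply le_of_forall_pos_le_add
    intro δ hδ
    have hεpos : 0 < δ * (R - r) / (2 * r) := by positivity
    have := hM _ hεpos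
    calc maxMod f r ≤ 2 * r * (B + δ * (R - r) / (2 * r)) / (R - r) + ‖f 0‖ := this
      _ = 2 * r * B / (R - r) + ‖f 0‖ + δ := by field_simp; ring
  have habs : -(f 0).re ≤ ‖f 0‖ := by
    have := Complex.abs_re_le_norm (f 0)
    cases abs_cases (f 0).re with
    | inl h => linarith [h.1, norm_nonneg (f 0)]
    | inr h => linarith [this, h.1]
  have : 2 * r * B / (R - r) = 2 * r / (R - r) * A - 2 * r / (R - r) * (f 0).re := by
    rw [hB]; field_simp
  rw [this] at hlim
  have hco : 0 < 2 * r / (R - r) := by positivity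
  have h2 : (R + r) / (R - r) = 2 * r / (R - r) + 1 := by field_simp; ring
  rw [h2]
  nlinarith [mul_le_mul_of_nonneg_left habs hco.le]
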